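/- arXiv:1310.0407 — 4 statements merged into one kernel-verified Lean document; each statement's English description precedes it below -/
import Mathlib

section
/- Let a be an element of a C*-algebra A. Then there exists c ∈ A** with c c* c = a; indeed c = r(a)|a|^{1/3} satisfies this, and moreover if a ⊥ b in A then the corresponding elements c and d satisfy c ⊥ d. -/
section KillLemmas

variable {M : Type*} [CStarAlgebra M]

private lemma flip_zero {x y : M} (h : x * y = 0) : star y * star x = 0 := by
  have := congrArg star h
  rwa [star_mul, star_zero] at this

private lemma sqrt_mul_sqrt_eq {y : M} (hsa : IsSelfAdjoint y)
    (hsp : ∀ t ∈ spectrum ℝ y, 0 ≤ t) :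
    cfc Real.sqrt y * cfc Real.sqrt y = y := by
  rw [← cfc_mul Real.sqrt Real.sqrt y]
  conv_rhs => rw [← cfc_id ℝ y hsa]
  exact cfc_congr fun t ht => Real.mul_self_sqrt (hsp t ht)

private lemma sqrt_kill {y w : M} (hsa : IsSelfAdjoint y)
    (hsp : ∀ t ∈ spectrum ℝ y, 0 ≤ t) (h : y * w = 0) : cfc Real.sqrt y * w = 0 := by
  have hs : IsSelfAdjoint (cfc Real.sqrt y) := cfc_predicate _ _
  have h2 : cfc Real.sqrt y * (cfc Real.sqrt y * w) = 0 := by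
    rw [← mul_assoc, sqrt_mul_sqrt_eq hsa hsp, h]
  rw [← CStarRing.star_mul_self_eq_zero_iff (cfc Real.sqrt y * w), star_mul, hs.star_eq,
    mul_assoc, h2, mul_zero]

private lemma spec_sqrt_nonneg {w : M} (hw : IsSelfAdjoint w) :
    ∀ t ∈ spectrum ℝ (cfc Real.sqrt w), 0 ≤ t := by
  rw [cfc_map_spectrum (f := Real.sqrt) (a := w) hw]
  rintro t ⟨s, -, rfl⟩
  exact Real.sqrt_nonneg s

private lemma rpow_third_kill {y w : M} (hsa : IsSelfAdjoint y)
    (hsp : ∀ t ∈ spectrum ℝ y, 0 ≤ t) (h : y * w = 0) :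
    cfc (fun t : ℝ => t ^ ((1 : ℝ) / 3)) y * w = 0 := by
  have hq1sa : IsSelfAdjoint (cfc Real.sqrt y) := cfc_predicate _ _
  have hq1sp := spec_sqrt_nonneg hsa
  have hq1w : cfc Real.sqrt y * w = 0 := sqrt_kill hsa hsp h
  have hq2w : cfc Real.sqrt (cfc Real.sqrt y) * w = 0 := sqrt_kill hq1sa hq1sp hq1w
  have hq2 : cfc Real.sqrt (cfc Real.sqrt y) = cfc (Real.sqrt ∘ Real.sqrt) y :=
    (cfc_comp Real.sqrt Real.sqrt y hsa (Real.continuous_sqrt.continuousOn)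
      (Real.continuous_sqrt.continuousOn)).symm
  have key : cfc (fun t : ℝ => t ^ ((1 : ℝ) / 3)) y
      = cfc (fun t : ℝ => t ^ ((1 : ℝ) / 12)) y * cfc (Real.sqrt ∘ Real.sqrt) y := by
    rw [← cfc_mul _ _ y ((Real.continuous_rpow_const (by norm_num)).continuousOn)
      ((Real.continuous_sqrt.comp Real.continuous_sqrt).continuousOn)]
    refine cfc_congr fun t ht => ?_
    have ht' : (0 : ℝ) ≤ t := hsp t ht
    have hss : Real.sqrt (Real.sqrt t) = t ^ ((1 : ℝ) / 4) := by
      rw [Real.sqrt_eq_rpow, Real.sqrt_eq_rpow, ← Real.rpow_mul ht']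
      norm_num
    show t ^ ((1 : ℝ) / 3) = t ^ ((1 : ℝ) / 12) * Real.sqrt (Real.sqrt t)
    rw [hss, ← Real.rpow_add' ht' (by norm_num)]
    norm_num
  rw [key, ← hq2, mul_assoc, hq2w, mul_zero]

private lemma rpow_third_kill' {y w : M} (hsa : IsSelfAdjoint y)
    (hsp : ∀ t ∈ spectrum ℝ y, 0 ≤ t) (h : w * y = 0) :
    w * cfc (fun t : ℝ => t ^ ((1 : ℝ) / 3)) y = 0 := by
  have hz : IsSelfAdjoint (cfc (fun t : ℝ => t ^ ((1 : ℝ) / 3)) y) := cfc_predicate _ _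
  have h' : y * star w = 0 := by
    have := flip_zero h
    rwa [hsa.star_eq] at this
  have := flip_zero (rpow_third_kill hsa hsp h')
  rwa [star_star, hz.star_eq] at this

private lemma cube_root_cubed {y : M} (hsa : IsSelfAdjoint y)
    (hsp : ∀ t ∈ spectrum ℝ y, 0 ≤ t) :
    cfc (fun t : ℝ => t ^ ((1 : ℝ) / 3)) y * cfc (fun t : ℝ => t ^ ((1 : ℝ) / 3)) y *
      cfc (fun t : ℝ => t ^ ((1 : ℝ) / 3)) y = y := by
  have h3 : cfc (fun t : ℝ => (t ^ ((1 : ℝ) / 3)) ^ (3 : ℕ)) y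
      = cfc (fun t : ℝ => t ^ ((1 : ℝ) / 3)) y ^ 3 :=
    cfc_pow (fun t : ℝ => t ^ ((1 : ℝ) / 3)) 3 y
      ((Real.continuous_rpow_const (by norm_num)).continuousOn) hsa
  have h4 : cfc (fun t : ℝ => (t ^ ((1 : ℝ) / 3)) ^ (3 : ℕ)) y = y := by
    conv_rhs => rw [← cfc_id ℝ y hsa]
    refine cfc_congr fun t ht => ?_
    have ht' : (0 : ℝ) ≤ t := hsp t ht
    rw [← Real.rpow_natCast (t ^ ((1 : ℝ) / 3)) 3, ← Real.rpow_mul ht']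
    norm_num
  rw [show cfc (fun t : ℝ => t ^ ((1 : ℝ) / 3)) y * cfc (fun t : ℝ => t ^ ((1 : ℝ) / 3)) y *
      cfc (fun t : ℝ => t ^ ((1 : ℝ) / 3)) y = cfc (fun t : ℝ => t ^ ((1 : ℝ) / 3)) y ^ 3
    by rw [pow_succ, pow_two], ← h3, h4]

end KillLemmas

/-- `|a| = (a* a)^{1/2}` via continuous functional calculus. -/
noncomputable def cAbs {M : Type*} [CStarAlgebra M] (a : M) : M :=
  cfc Real.sqrt (star a * a)

/-- A projection in a C*-algebra. -/
def IsProjE {M : Type*} [CStarAlgebra M] (p : M) : Prop :=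
  IsSelfAdjoint p ∧ p * p = p

/-- `p` is the support (range) projection of `x`. -/
def IsSupportProjOf {M : Type*} [CStarAlgebra M] (p x : M) : Prop :=
  IsProjE p ∧ p * x = x ∧ ∀ q, IsProjE q → q * x = x → p * q = p

/-- `u` is the range partial isometry of `a` from the polar decomposition `a = u|a|`. -/
def IsRangePI {M : Type*} [CStarAlgebra M] (u a : M) : Prop :=
  u * star u * u = u ∧ a = u * cAbs a ∧
    IsSupportProjOf (star u * u) (cAbs a) ∧ IsSupportProjOf (u * star u) (cAbs (star a))

/-- Orthogonality: `a ⊥ b` iff `a b* = 0` and `b* a = 0`. -/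
def Ortho {M : Type*} [Mul M] [Star M] [Zero M] (a b : M) : Prop :=
  a * star b = 0 ∧ star b * a = 0

section CAbsFacts

variable {M : Type*} [CStarAlgebra M]

private lemma cAbs_sa (x : M) : IsSelfAdjoint (cAbs x) := cfc_predicate _ _

private lemma cAbs_sp (x : M) : ∀ t ∈ spectrum ℝ (cAbs x), 0 ≤ t :=
  spec_sqrt_nonneg (IsSelfAdjoint.star_mul_self x)

end CAbsFacts

/-- for each `a` in a C*-algebra `A` there is `c` in the bidual
(here a unital C*-algebra `M` in which `A` embeds) with `c c* c = a`; indeed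
`c = r(a)|a|^{1/3}` works, and if `a ⊥ b` then the corresponding elements
`c = r(a)|a|^{1/3}` and `d = r(b)|b|^{1/3}` satisfy `c ⊥ d`. -/
theorem exists_cube_root_factor {A M : Type*} [NonUnitalCStarAlgebra A] [CStarAlgebra M]
    (ι : A →⋆ₙₐ[ℂ] M) (hι : Function.Injective ι) (a b : A) (u v : M)
    (hu : IsRangePI u (ι a)) (hv : IsRangePI v (ι b)) :
    ∃ c d : M,
      c = u * cfc (fun t : ℝ => t ^ ((1 : ℝ) / 3)) (cAbs (ι a)) ∧
      d = v * cfc (fun t : ℝ => t ^ ((1 : ℝ) / 3)) (cAbs (ι b)) ∧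
      c * star c * c = ι a ∧ d * star d * d = ι b ∧
      (Ortho a b → Ortho c d) := by
  obtain ⟨hu1, hu2, hu3, hu4⟩ := hu
  obtain ⟨hv1, hv2, hv3, hv4⟩ := hv
  set ya := cAbs (ι a) with hya_def
  set yb := cAbs (ι b) with hyb_def
  set za := cfc (fun t : ℝ => t ^ ((1 : ℝ) / 3)) ya with hza_def
  set zb := cfc (fun t : ℝ => t ^ ((1 : ℝ) / 3)) yb with hzb_def
  have hya_sa : IsSelfAdjoint ya := cAbs_sa _
  have hyb_sa : IsSelfAdjoint yb := cAbs_sa _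
  have hya_sp : ∀ t ∈ spectrum ℝ ya, 0 ≤ t := cAbs_sp _
  have hyb_sp : ∀ t ∈ spectrum ℝ yb, 0 ≤ t := cAbs_sp _
  have hza_sa : IsSelfAdjoint za := cfc_predicate _ _
  have hzb_sa : IsSelfAdjoint zb := cfc_predicate _ _
  -- support projection facts
  have cube : ∀ (y : M), IsSelfAdjoint y → (∀ t ∈ spectrum ℝ y, 0 ≤ t) →
      cfc (fun t : ℝ => t ^ ((1 : ℝ) / 3)) y * cfc (fun t : ℝ => t ^ ((1 : ℝ) / 3)) y *
        cfc (fun t : ℝ => t ^ ((1 : ℝ) / 3)) y = y :=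
    fun y h1 h2 => cube_root_cubed h1 h2
  have main : ∀ (w : M) (y z : M), IsSelfAdjoint y → (∀ t ∈ spectrum ℝ y, 0 ≤ t) →
      z = cfc (fun t : ℝ => t ^ ((1 : ℝ) / 3)) y → w * star w * w = w →
      (ι a : M) = (ι a : M) → (star w * w) * y = y → (ι a : M) = (ι a : M) →
      star w * (w * z) = z := by
    intro w y z hy hyp hz hw _ hsupp _
    have hy' : y * (star w * w) = y := by
      have := congrArg star hsupp
      rwa [star_mul, hy.star_eq, (IsSelfAdjoint.star_mul_self w).star_eq] at this
    have h0 : y * (1 - star w * w) = 0 := by rw [mul_sub, mul_one, hy', sub_self]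
    have h1 : z * (1 - star w * w) = 0 := by rw [hz]; exact rpow_third_kill hy hyp h0
    have h2 : z * (star w * w) = z := by
      rwa [mul_sub, mul_one, sub_eq_zero, eq_comm] at h1
    have h3 : (star w * w) * z = z := by
      have := congrArg star h2
      have hzsa : IsSelfAdjoint z := hz ▸ cfc_predicate _ _
      rwa [star_mul, hzsa.star_eq, (IsSelfAdjoint.star_mul_self w).star_eq] at this
    rwa [← mul_assoc]
  have hpa : star u * (u * za) = za :=
    main u ya za hya_sa hya_sp rfl hu1 rfl hu3.2.1 rfl
  have hpb : star v * (v * zb) = zb :=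
    main v yb zb hyb_sa hyb_sp rfl hv1 rfl hv3.2.1 rfl
  refine ⟨u * za, v * zb, rfl, rfl, ?_, ?_, ?_⟩
  · -- c c* c = ι a
    rw [star_mul, hza_sa.star_eq]
    calc u * za * (za * star u) * (u * za)
        = u * (za * (za * (star u * (u * za)))) := by simp only [mul_assoc]
      _ = u * (za * (za * za)) := by rw [hpa]
      _ = u * ya := by rw [← mul_assoc za za za, cube ya hya_sa hya_sp]
      _ = ι a := hu2.symm
  · rw [star_mul, hzb_sa.star_eq]
    calc v * zb * (zb * star v) * (v * zb)
        = v * (zb * (zb * (star v * (v * zb)))) := by simp only [mul_assoc]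
      _ = v * (zb * (zb * zb)) := by rw [hpb]
      _ = v * yb := by rw [← mul_assoc zb zb zb, cube yb hyb_sa hyb_sp]
      _ = ι b := hv2.symm
  · rintro ⟨hab1, hab2⟩
    have h1 : ι a * star (ι b) = 0 := by
      have := congrArg ι hab1
      rwa [map_mul, map_star, map_zero] at this
    have h2 : star (ι b) * ι a = 0 := by
      have := congrArg ι hab2
      rwa [map_mul, map_star, map_zero] at this
    -- za * zb = 0
    have hXZ : star (ι a) * ι a * (star (ι b) * ι b) = 0 := by
      calc star (ι a) * ι a * (star (ι b) * ι b)
          = star (ι a) * ((ι a * star (ι b)) * ι b) := by simp only [mul_assoc]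
        _ = 0 := by rw [h1, zero_mul, mul_zero]
    have k1 : ya * (star (ι b) * ι b) = 0 :=
      sqrt_kill (IsSelfAdjoint.star_mul_self (ι a)) spectrum_star_mul_self_nonneg hXZ
    have k2 : (star (ι b) * ι b) * ya = 0 := by
      have := flip_zero k1
      rwa [hya_sa.star_eq, (IsSelfAdjoint.star_mul_self (ι b)).star_eq] at this
    have k3 : yb * ya = 0 :=
      sqrt_kill (IsSelfAdjoint.star_mul_self (ι b)) spectrum_star_mul_self_nonneg k2
    have k4 : ya * yb = 0 := by
      have := flip_zero k3
      rwa [hya_sa.star_eq, hyb_sa.star_eq] at this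
    have k5 : za * yb = 0 := rpow_third_kill hya_sa hya_sp k4
    have k6 : yb * za = 0 := by
      have := flip_zero k5
      rwa [hza_sa.star_eq, hyb_sa.star_eq] at this
    have k7 : zb * za = 0 := rpow_third_kill hyb_sa hyb_sp k6
    have k8 : za * zb = 0 := by
      have := flip_zero k7
      rwa [hza_sa.star_eq, hzb_sa.star_eq] at this
    constructor
    · rw [star_mul, hzb_sa.star_eq]
      calc u * za * (zb * star v)
          = u * ((za * zb) * star v) := by simp only [mul_assoc]
        _ = 0 := by rw [k8, zero_mul, mul_zero]
    · rw [star_mul, hzb_sa.star_eq]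
      have h2' : yb * (star v * (u * ya)) = 0 := by
        rw [hu2, hv2, star_mul, hyb_sa.star_eq] at h2
        simpa only [mul_assoc] using h2
      have k9 : zb * (star v * (u * ya)) = 0 := rpow_third_kill hyb_sa hyb_sp h2'
      have k10 : (zb * (star v * u)) * ya = 0 := by simpa only [mul_assoc] using k9
      have k11 : (zb * (star v * u)) * za = 0 := rpow_third_kill' hya_sa hya_sp k10
      show zb * star v * (u * za) = 0
      simpa only [mul_assoc] using k11
end

section
/- Let U, V be unital *-homomorphisms from a unital C*-algebra A into a unital C*-algebra B. If the pair (U, V) is orthogonality preserving on A_sa (i.e., a, b self-adjoint with ab = 0 implies U(a) V(b) = 0), then U = V. -/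
open Finset Filter

noncomputable section OPAux

namespace OPAux

/-- clamp to `[0,1]`. -/
def clampf (s : ℝ) : ℝ := max 0 (min 1 s)

@[fun_prop]
lemma clampf_continuous : Continuous clampf := by
  unfold clampf; fun_prop

lemma clampf_nonneg (s : ℝ) : 0 ≤ clampf s := le_max_left _ _

lemma clampf_le_one (s : ℝ) : clampf s ≤ 1 :=
  max_le zero_le_one (min_le_left _ _)

lemma clampf_of_one_le {s : ℝ} (h : 1 ≤ s) : clampf s = 1 := by
  rw [clampf, min_eq_left h, max_eq_right zero_le_one]

lemma clampf_of_nonpos {s : ℝ} (h : s ≤ 0) : clampf s = 0 :=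
  max_eq_left <| (min_le_right _ _).trans h

lemma clampf_of_mem {s : ℝ} (h0 : 0 ≤ s) (h1 : s ≤ 1) : clampf s = s := by
  rw [clampf, min_eq_right h1, max_eq_right h0]

lemma sum_clampf (m : ℕ) : ∀ s : ℝ, 0 ≤ s → s ≤ m →
    ∑ k ∈ Finset.range (m + 1), clampf ((k : ℝ) + 1 - s) = (m + 1 : ℝ) - s := by
  induction m with
  | zero =>
    intro s h0 h1
    norm_num at h1
    have : s = 0 := le_antisymm h1 h0
    subst this
    simp [clampf_of_one_le]
  | succ m ih =>
    intro s h0 h1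
    rw [Finset.sum_range_succ']
    rcases le_or_gt 1 s with hs | hs
    · have hre : ∀ k ∈ Finset.range (m + 1),
          clampf ((k + 1 : ℕ) + 1 - s) = clampf ((k : ℝ) + 1 - (s - 1)) := by
        intro k _
        push_cast
        ring_nf
      rw [Finset.sum_congr rfl hre, ih (s - 1) (by linarith)
        (by push_cast at h1 ⊢; linarith)]
      rw [show ((0:ℕ) : ℝ) + 1 - s = 1 - s by norm_num,
        clampf_of_nonpos (by linarith)]
      push_cast
      ring
    · have hre : ∀ k ∈ Finset.range (m + 1),
          clampf ((k + 1 : ℕ) + 1 - s) = 1 := by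
        intro k _
        apply clampf_of_one_le
        push_cast
        linarith
      rw [Finset.sum_congr rfl hre, Finset.sum_const, Finset.card_range,
        show ((0:ℕ) : ℝ) + 1 - s = 1 - s by norm_num,
        clampf_of_mem (by linarith) (by linarith)]
      push_cast
      ring

/-- node functions -/
def gfun (L ε : ℝ) (k : ℕ) : ℝ → ℝ := fun t => clampf ((k : ℝ) + 1 - (t + L) / ε)

@[fun_prop]
lemma gfun_continuous (L ε : ℝ) (k : ℕ) : Continuous (gfun L ε k) := by
  unfold gfun; fun_prop

lemma gfun_nonneg (L ε : ℝ) (k : ℕ) (t : ℝ) : 0 ≤ gfun L ε k t := clampf_nonneg _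

lemma gfun_le_one (L ε : ℝ) (k : ℕ) (t : ℝ) : gfun L ε k t ≤ 1 := clampf_le_one _

lemma gfun_orth (L ε : ℝ) (k : ℕ) (t : ℝ) :
    (1 - gfun L ε (k + 1) t) * gfun L ε k t = 0 := by
  rcases le_or_gt ((t + L) / ε) ((k : ℝ) + 1) with h | h
  · have : gfun L ε (k + 1) t = 1 := clampf_of_one_le (by push_cast; linarith)
    rw [this, sub_self, zero_mul]
  · have : gfun L ε k t = 0 := clampf_of_nonpos (by linarith)
    rw [this, mul_zero]

end OPAux

open OPAux

variable {A B : Type*} [CStarAlgebra A] [CStarAlgebra B]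

noncomputable instance (priority := low) : PartialOrder A := CStarAlgebra.spectralOrder A
instance (priority := low) : StarOrderedRing A := CStarAlgebra.spectralOrderedRing A

lemma OPAux.rsmul_nonneg {w : B} (hw : 0 ≤ w) {ε : ℝ} (hε : 0 ≤ ε) : (0 : B) ≤ ε • w := by
  rw [← cfc_const_mul_id ε w (IsSelfAdjoint.of_nonneg hw)]
  exact cfc_nonneg fun t ht => mul_nonneg hε (spectrum_nonneg_of_nonneg hw ht)

lemma OPAux.map_rsmul (U : A →⋆ₐ[ℂ] B) (ε : ℝ) (y : A) : U (ε • y) = ε • U y := by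
  rw [← algebraMap_smul ℂ ε y, map_smul, algebraMap_smul]

lemma OPAux.map_ralgebraMap (U : A →⋆ₐ[ℂ] B) (C : ℝ) :
    U (algebraMap ℝ A C) = algebraMap ℝ B C := by
  rw [IsScalarTower.algebraMap_apply ℝ ℂ A, AlgHomClass.commutes,
    IsScalarTower.algebraMap_apply ℝ ℂ B]

lemma OPAux.key [Nontrivial A] (U V : A →⋆ₐ[ℂ] B)
    (hOP : ∀ a b : A, IsSelfAdjoint a → IsSelfAdjoint b → a * b = 0 →
      U a * V b = 0 ∧ V b * U a = 0)
    (x : A) (hx : IsSelfAdjoint x) {ε : ℝ} (hε : 0 < ε) :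
    U x ≤ V x + algebraMap ℝ B ε := by
  set L : ℝ := ‖x‖ with hL
  set m : ℕ := Nat.ceil (2 * L / ε) with hm
  -- spectrum bounds
  have hspec : ∀ t ∈ spectrum ℝ x, 0 ≤ (t + L) / ε ∧ (t + L) / ε ≤ m := by
    intro t ht
    have h1 : ‖t‖ ≤ ‖x‖ := spectrum.norm_le_norm_of_mem ht
    rw [Real.norm_eq_abs, abs_le] at h1
    refine ⟨div_nonneg (by linarith [h1.1]) hε.le, le_trans ?_ (Nat.le_ceil (2 * L / ε))⟩
    gcongr
    linarith [h1.2]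
  set c : ℕ → A := fun k => cfc (gfun L ε k) x with hc
  have hcsa : ∀ k, IsSelfAdjoint (c k) := fun k => cfc_predicate _ x
  have hc0 : ∀ k, 0 ≤ c k := fun k => cfc_nonneg fun t _ => gfun_nonneg L ε k t
  have hc1 : ∀ k, c k ≤ 1 := fun k => cfc_le_one _ x fun t _ => gfun_le_one L ε k t
  have hUmono : Monotone U := OrderHomClass.mono U
  have hVmono : Monotone V := OrderHomClass.mono V
  -- the key inequality Q k ≤ P (k+1)
  have hQP : ∀ k, V (c k) ≤ U (c (k + 1)) := by
    intro k
    have hprod : (cfc (fun t => 1 - gfun L ε (k + 1) t) x) * c k = 0 := by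
      rw [hc, ← cfc_mul _ _ x (by fun_prop) (by fun_prop)]
      have : (fun t => (1 - gfun L ε (k + 1) t) * gfun L ε k t) = (0 : ℝ → ℝ) := by
        funext t; exact gfun_orth L ε k t
      rw [this, cfc_zero]
    obtain ⟨h1, h2⟩ := hOP _ _ (cfc_predicate _ x) (hcsa k) hprod
    have hone : cfc (fun _ : ℝ => (1 : ℝ)) x = 1 := by
      simpa using cfc_const (1 : ℝ) x
    have hEeq : cfc (fun t => 1 - gfun L ε (k + 1) t) x = 1 - c (k + 1) := by
      rw [cfc_sub (fun _ => (1:ℝ)) (gfun L ε (k+1)) x (by fun_prop) (by fun_prop), hone]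
    rw [hEeq, map_sub, map_one] at h1 h2
    have e1 : U (c (k + 1)) * V (c k) = V (c k) := by
      rw [sub_mul, one_mul, sub_eq_zero] at h1
      exact h1.symm
    have e2 : V (c k) * U (c (k + 1)) = V (c k) := by
      rw [mul_sub, mul_one, sub_eq_zero] at h2
      exact h2.symm
    have hQ1 : V (c k) ≤ 1 := by
      have := hVmono (hc1 k)
      rwa [map_one] at this
    have hEsa : IsSelfAdjoint (U (c (k + 1))) := (hcsa (k + 1)).map U
    have step1 : V (c k) ≤ U (c (k + 1)) * U (c (k + 1)) := by
      have hconj := star_left_conjugate_le_conjugate hQ1 (U (c (k + 1)))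
      rw [hEsa.star_eq, mul_one] at hconj
      calc V (c k) = U (c (k + 1)) * V (c k) * U (c (k + 1)) := by rw [e1, e2]
        _ ≤ U (c (k + 1)) * U (c (k + 1)) := hconj
    have step2 : U (c (k + 1)) * U (c (k + 1)) ≤ U (c (k + 1)) := by
      rw [← map_mul]
      apply hUmono
      rw [hc, ← cfc_mul _ _ x (by fun_prop) (by fun_prop)]
      refine cfc_mono (fun t _ => ?_) (by fun_prop) (by fun_prop)
      have h0 := gfun_nonneg L ε (k + 1) t
      have h1' := gfun_le_one L ε (k + 1) t
      nlinarith
    exact step1.trans step2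
  -- summed inequality
  have hsum_le : ∑ k ∈ range (m + 1), V (c k) ≤ (∑ k ∈ range (m + 1), U (c k)) + 1 := by
    have hQm : V (c m) ≤ 1 := by
      have := hVmono (hc1 m); rwa [map_one] at this
    have hP0 : 0 ≤ U (c 0) := by
      have := hUmono (hc0 0); rwa [map_zero] at this
    calc ∑ k ∈ range (m + 1), V (c k)
        = (∑ k ∈ range m, V (c k)) + V (c m) := Finset.sum_range_succ _ m
      _ ≤ (∑ k ∈ range m, U (c (k + 1))) + 1 :=
          add_le_add (Finset.sum_le_sum fun k _ => hQP k) hQm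
      _ ≤ ((∑ k ∈ range m, U (c (k + 1))) + U (c 0)) + 1 := by
          have := add_le_add_right
            (add_le_add_left hP0 (∑ k ∈ range m, U (c (k + 1)))) (1 : B)
          simpa using this
      _ = (∑ k ∈ range (m + 1), U (c k)) + 1 := by
          rw [← Finset.sum_range_succ' (fun k => U (c k)) m]
  -- exact sum formula
  have hsum : ε • ∑ k ∈ range (m + 1), c k = algebraMap ℝ A (ε * (m + 1) - L) - x := by
    have h1 : ∑ k ∈ range (m + 1), c k = cfc (fun t : ℝ => ((m : ℝ) + 1) - (t + L) / ε) x := by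
      rw [hc, ← cfc_sum (fun k => gfun L ε k) x (range (m + 1))
        (fun i _ => (gfun_continuous L ε i).continuousOn)]
      apply cfc_congr
      intro t ht
      obtain ⟨h0, h1⟩ := hspec t ht
      have : (∑ k ∈ range (m + 1), gfun L ε k) t
          = ∑ k ∈ range (m + 1), clampf ((k : ℝ) + 1 - (t + L) / ε) := by
        rw [Finset.sum_apply]; rfl
      rw [this, sum_clampf m _ h0 h1]
    rw [h1, ← cfc_smul ε _ x (by fun_prop)]
    have h2 : (fun t : ℝ => ε • (((m : ℝ) + 1) - (t + L) / ε))
        = fun t : ℝ => (ε * (m + 1) - L) - t := by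
      funext t
      rw [smul_eq_mul]
      field_simp
      ring
    rw [h2, cfc_sub (fun _ => (ε * ((m : ℝ) + 1) - L)) (fun t => t) x (by fun_prop) (by fun_prop),
      cfc_const _ x, cfc_id' ℝ x]
  -- push through U and V
  have hUx : U x = algebraMap ℝ B (ε * (m + 1) - L) - ε • ∑ k ∈ range (m + 1), U (c k) := by
    have := congrArg U hsum
    rw [map_rsmul, map_sub, map_ralgebraMap, map_sum] at this
    rw [this, sub_sub_cancel]
  have hVx : V x = algebraMap ℝ B (ε * (m + 1) - L) - ε • ∑ k ∈ range (m + 1), V (c k) := by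
    have := congrArg V hsum
    rw [map_rsmul, map_sub, map_ralgebraMap, map_sum] at this
    rw [this, sub_sub_cancel]
  -- conclude
  have h0 : (0 : B) ≤ ε • (((∑ k ∈ range (m + 1), U (c k)) + 1) - ∑ k ∈ range (m + 1), V (c k)) :=
    rsmul_nonneg (sub_nonneg.mpr hsum_le) hε.le
  have hre : (V x + algebraMap ℝ B ε) - U x
      = ε • (((∑ k ∈ range (m + 1), U (c k)) + 1) - ∑ k ∈ range (m + 1), V (c k)) := by
    rw [hUx, hVx, smul_sub, smul_add, Algebra.algebraMap_eq_smul_one (R := ℝ) (A := B) ε]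
    abel
  have := sub_nonneg.mp (hre ▸ h0)
  exact this

end OPAux

/-- if `U, V` are unital *-homomorphisms between unital C*-algebras and
the pair `(U,V)` is orthogonality preserving on `A_sa` (i.e. for self-adjoint `a, b`
with `ab = 0` one has `U(a) V(b)* = V(b)* U(a) = 0`), then `U = V`. -/
theorem unital_starAlgHom_pair_op_eq
    {A B : Type*} [CStarAlgebra A] [CStarAlgebra B] (U V : A →⋆ₐ[ℂ] B)
    (hOP : ∀ a b : A, IsSelfAdjoint a → IsSelfAdjoint b → a * b = 0 →
      U a * star (V b) = 0 ∧ star (V b) * U a = 0) :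
    U = V := by
  rcases subsingleton_or_nontrivial A with hA | hA
  · ext a
    rw [Subsingleton.elim a (0 : A), map_zero, map_zero]
  · have hOP1 : ∀ a b : A, IsSelfAdjoint a → IsSelfAdjoint b → a * b = 0 →
        U a * V b = 0 ∧ V b * U a = 0 := by
      intro a b ha hb hab
      have := hOP a b ha hb hab
      rwa [(hb.map V).star_eq] at this
    have hOP2 : ∀ a b : A, IsSelfAdjoint a → IsSelfAdjoint b → a * b = 0 →
        V a * U b = 0 ∧ U b * V a = 0 := by
      intro a b ha hb hab
      have hba : b * a = 0 := by
        have h' : b * a = star (a * b) := by rw [star_mul, ha.star_eq, hb.star_eq]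
        rw [h', hab, star_zero]
      obtain ⟨h1, h2⟩ := hOP1 b a hb ha hba
      exact ⟨h2, h1⟩
    have hsa : ∀ y : A, IsSelfAdjoint y → U y = V y := by
      intro y hy
      have halg : Filter.Tendsto (fun ε : ℝ => algebraMap ℝ B ε) (nhds 0) (nhds 0) := by
        have hcont : Continuous (fun ε : ℝ => ε • (1 : B)) :=
          continuous_id.smul continuous_const
        simpa [Algebra.algebraMap_eq_smul_one] using hcont.tendsto 0
      have key_le : ∀ (W₁ W₂ : A →⋆ₐ[ℂ] B),
          (∀ a b : A, IsSelfAdjoint a → IsSelfAdjoint b → a * b = 0 →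
            W₁ a * W₂ b = 0 ∧ W₂ b * W₁ a = 0) → W₁ y ≤ W₂ y := by
        intro W₁ W₂ hW
        have lim : Filter.Tendsto (fun ε : ℝ => W₂ y + algebraMap ℝ B ε)
            (nhdsWithin 0 (Set.Ioi 0)) (nhds (W₂ y)) := by
          have := (tendsto_const_nhds (x := W₂ y)
            (f := nhdsWithin (0:ℝ) (Set.Ioi 0))).add
            (halg.mono_left nhdsWithin_le_nhds)
          simpa using this
        refine ge_of_tendsto lim ?_
        filter_upwards [self_mem_nhdsWithin] with ε hε
        exact OPAux.key W₁ W₂ hW y hy hε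
      exact le_antisymm (key_le U V hOP1) (key_le V U hOP2)
    ext a
    conv_lhs => rw [← realPart_add_I_smul_imaginaryPart a]
    conv_rhs => rw [← realPart_add_I_smul_imaginaryPart a]
    rw [map_add, map_add, map_smul, map_smul,
      hsa _ (realPart a).2, hsa _ (imaginaryPart a).2]
end

section
/- Let f : B_A(0, ϱ) → B be a holomorphic map between a C*-algebra A and a complex Banach space B whose Taylor series at zero, f = Σ_{k≥0} P_k with P_k a k-homogeneous continuous polynomial, converges uniformly on U = B_A(0, δ). Then f is orthogonally additive on U (i.e., f(a+b) = f(a) + f(b) whenever a, b, a+b ∈ U and a ⊥ b) if and only if every P_k is orthogonally additive on A and P_0 = 0. -/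
open Filter Finset Topology

lemma aux_coeff_zero {B : Type*} [NormedAddCommGroup B] [NormedSpace ℂ B]
    (c : ℕ → B) (ε : ℝ) (hε : 0 < ε)
    (h : ∀ t : ℝ, 0 < t → t < ε →
      Tendsto (fun N => ∑ k ∈ Finset.range (N + 1), ((t : ℂ) ^ k) • c k) atTop (𝓝 0)) :
    ∀ k, c k = 0 := by
  set t0 : ℝ := ε / 2 with ht0
  have ht0pos : 0 < t0 := by positivity
  have ht0lt : t0 < ε := by rw [ht0]; linarith
  clear_value t0
  -- terms at t0 tend to zero
  have hterm : Tendsto (fun k : ℕ => ((t0 : ℂ) ^ k) • c k) atTop (𝓝 0) := by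
    have h1 := h t0 ht0pos ht0lt
    have h2 := ((h1.comp (tendsto_add_atTop_nat 1)).sub h1)
    rw [sub_zero] at h2
    exact (tendsto_add_atTop_iff_nat 1).mp (h2.congr fun N => by
      simp [Function.comp, Finset.sum_range_succ])
  -- boundedness
  obtain ⟨M0, hM0⟩ := (hterm.norm.bddAbove_range).exists_ge 0
  set M : ℝ := M0 + 1 with hM
  have hMpos : 0 < M := by
    have := hM0.1
    rw [hM]; linarith
  clear_value M
  have hbd : ∀ k, ‖c k‖ ≤ M / t0 ^ k := by
    intro k
    have h1 : ‖((t0 : ℂ) ^ k) • c k‖ ≤ M0 :=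
      hM0.2 _ ⟨k, rfl⟩
    rw [norm_smul, norm_pow, Complex.norm_real, Real.norm_eq_abs, abs_of_pos ht0pos] at h1
    rw [le_div_iff₀ (by positivity), mul_comm]
    linarith
  -- strong induction
  intro m
  induction m using Nat.strong_induction_on with
  | _ m ih =>
  have key : ∀ t : ℝ, 0 < t → t ≤ t0 / 2 → ‖c m‖ ≤ (2 * M / t0 ^ (m + 1)) * t := by
    intro t ht ht2
    have htlt : t < t0 := by linarith
    set r : ℝ := t / t0 with hr
    have hr0 : 0 < r := by positivity
    have hr1 : r ≤ 1 / 2 := by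
      rw [hr, div_le_div_iff₀ ht0pos (by norm_num)]
      linarith
    have hrlt1 : r < 1 := by linarith
    have hrdef : r * t0 = t := by rw [hr, div_mul_cancel₀ t ht0pos.ne']
    clear_value r
    have hS := h t ht (by linarith)
    -- the partial sums for N ≥ m equal t^m • c m + tail
    have hsplit : ∀ N, m ≤ N →
        ∑ k ∈ Finset.range (N + 1), ((t : ℂ) ^ k) • c k
          = ((t : ℂ) ^ m) • c m + ∑ k ∈ Finset.Ico (m + 1) (N + 1), ((t : ℂ) ^ k) • c k := by
      intro N hN
      rw [Finset.range_eq_Ico, ← Finset.sum_Ico_consecutive _ (Nat.zero_le (m + 1)) (by omega)]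
      congr 1
      rw [← Finset.range_eq_Ico, Finset.sum_range_succ]
      have : ∀ k ∈ Finset.range m, ((t : ℂ) ^ k) • c k = 0 := by
        intro k hk
        rw [ih k (Finset.mem_range.mp hk), smul_zero]
      rw [Finset.sum_eq_zero this, zero_add]
    -- bound the tail
    have htail : ∀ N, ‖∑ k ∈ Finset.Ico (m + 1) (N + 1), ((t : ℂ) ^ k) • c k‖
        ≤ M * r ^ (m + 1) * (1 - r)⁻¹ := by
      intro N
      calc ‖∑ k ∈ Finset.Ico (m + 1) (N + 1), ((t : ℂ) ^ k) • c k‖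
          ≤ ∑ k ∈ Finset.Ico (m + 1) (N + 1), ‖((t : ℂ) ^ k) • c k‖ := norm_sum_le _ _
        _ ≤ ∑ k ∈ Finset.Ico (m + 1) (N + 1), M * r ^ k := by
            apply Finset.sum_le_sum
            intro k hk
            rw [norm_smul, norm_pow, Complex.norm_real, Real.norm_eq_abs, abs_of_pos ht]
            calc t ^ k * ‖c k‖ ≤ t ^ k * (M / t0 ^ k) := by
                  apply mul_le_mul_of_nonneg_left (hbd k) (by positivity)
              _ = M * r ^ k := by
                  rw [← hrdef]; field_simp; ring
        _ ≤ M * r ^ (m + 1) * (1 - r)⁻¹ := by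
            have hsum : ∑ k ∈ Finset.Ico (m + 1) (N + 1), M * r ^ k
                = M * r ^ (m + 1) * ∑ j ∈ Finset.range (N + 1 - (m + 1)), r ^ j := by
              rw [Finset.sum_Ico_eq_sum_range, Finset.mul_sum]
              congr 1; funext j; rw [pow_add]; ring
            rw [hsum]
            apply mul_le_mul_of_nonneg_left _ (by positivity)
            have := Summable.sum_le_tsum (Finset.range (N + 1 - (m + 1)))
              (fun i _ => by positivity) (summable_geometric_of_lt_one hr0.le hrlt1)
            rwa [tsum_geometric_of_lt_one hr0.le hrlt1] at this
    -- pass to the limit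
    have hbound : ‖((t : ℂ) ^ m) • c m‖ ≤ M * r ^ (m + 1) * (1 - r)⁻¹ := by
      have hten : Tendsto (fun N : ℕ =>
          ‖∑ k ∈ Finset.range (N + 1), ((t : ℂ) ^ k) • c k‖ + M * r ^ (m + 1) * (1 - r)⁻¹)
          atTop (𝓝 (M * r ^ (m + 1) * (1 - r)⁻¹)) := by
        have := (hS.norm).add_const (M * r ^ (m + 1) * (1 - r)⁻¹)
        simpa using this
      apply ge_of_tendsto hten
      filter_upwards [eventually_ge_atTop m] with N hN
      have h1 : ((t : ℂ) ^ m) • c m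
          = ∑ k ∈ Finset.range (N + 1), ((t : ℂ) ^ k) • c k
            - ∑ k ∈ Finset.Ico (m + 1) (N + 1), ((t : ℂ) ^ k) • c k := by
        rw [hsplit N hN]; abel
      rw [h1]
      calc ‖_ - _‖ ≤ ‖∑ k ∈ Finset.range (N + 1), ((t : ℂ) ^ k) • c k‖
            + ‖∑ k ∈ Finset.Ico (m + 1) (N + 1), ((t : ℂ) ^ k) • c k‖ := norm_sub_le _ _
        _ ≤ _ := by gcongr; exact htail N
    -- now divide
    rw [norm_smul, norm_pow, Complex.norm_real, Real.norm_eq_abs, abs_of_pos ht] at hbound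
    have hinv : (1 - r)⁻¹ ≤ 2 := by
      rw [inv_le_comm₀ (by linarith) (by norm_num)]
      linarith
    have h2 : t ^ m * ‖c m‖ ≤ M * r ^ (m + 1) * 2 := by
      calc t ^ m * ‖c m‖ ≤ M * r ^ (m + 1) * (1 - r)⁻¹ := hbound
        _ ≤ M * r ^ (m + 1) * 2 := by
            apply mul_le_mul_of_nonneg_left hinv (by positivity)
    have h3 : M * r ^ (m + 1) * 2 = (2 * M / t0 ^ (m + 1) * t) * t ^ m := by
      rw [← hrdef]; field_simp; ring
    rw [h3] at h2
    have := (mul_le_mul_iff_of_pos_right (by positivity : (0:ℝ) < t ^ m)).mp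
      (by linarith [h2] : ‖c m‖ * t ^ m ≤ (2 * M / t0 ^ (m + 1) * t) * t ^ m)
    linarith
  -- conclude c m = 0
  have hle : ‖c m‖ ≤ 0 := by
    have hten : Tendsto (fun t : ℝ => (2 * M / t0 ^ (m + 1)) * t) (𝓝[>] 0) (𝓝 0) := by
      have : Tendsto (fun t : ℝ => (2 * M / t0 ^ (m + 1)) * t) (𝓝 0)
          (𝓝 ((2 * M / t0 ^ (m + 1)) * 0)) :=
        (continuous_const.mul continuous_id).tendsto 0
      rw [mul_zero] at this
      exact this.mono_left nhdsWithin_le_nhds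
    apply ge_of_tendsto hten
    filter_upwards [Ioc_mem_nhdsGT_of_mem
      (show (0:ℝ) ∈ Set.Ico 0 (t0 / 2) from ⟨le_refl _, by positivity⟩)] with t ht
    exact key t ht.1 ht.2
  simpa using hle

/-- let `f : B_A(0,ϱ) → B` be holomorphic, with Taylor series at zero
`f = Σ P_k` (each `P_k` a continuous `k`-homogeneous polynomial) converging uniformly
on `U = B_A(0,δ)`. Then `f` is orthogonally additive on `U` iff every `P_k` is
orthogonally additive on `A` and `P₀ = 0`. -/
theorem orthogonally_additive_iff_components
    {A B : Type*} [NonUnitalCStarAlgebra A] [NormedAddCommGroup B] [NormedSpace ℂ B]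
    (ϱ δ : ℝ) (hδ : 0 < δ) (hδϱ : δ ≤ ϱ) (f : A → B)
    (hf : DifferentiableOn ℂ f (Metric.ball 0 ϱ))
    (P : ℕ → A → B)
    (hP : ∀ k, ∃ Q : ContinuousMultilinearMap ℂ (fun _ : Fin k => A) B,
      ∀ x : A, P k x = Q (fun _ => x))
    (hconv : TendstoUniformlyOn (fun N x => ∑ k ∈ Finset.range (N + 1), P k x) f
      atTop (Metric.ball 0 δ)) :
    (∀ a b : A, a ∈ Metric.ball (0 : A) δ → b ∈ Metric.ball (0 : A) δ →
        a + b ∈ Metric.ball (0 : A) δ → Ortho a b → f (a + b) = f a + f b) ↔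
      ((∀ k, ∀ a b : A, Ortho a b → P k (a + b) = P k a + P k b) ∧
        (∀ x : A, P 0 x = 0)) := by
  have homog : ∀ (k : ℕ) (t : ℂ) (x : A), P k (t • x) = t ^ k • P k x := by
    intro k t x
    obtain ⟨Q, hQ⟩ := hP k
    rw [hQ, hQ]
    have := Q.map_smul_univ (fun _ : Fin k => t) (fun _ => x)
    simpa using this
  have hP0const : ∀ x y : A, P 0 x = P 0 y := by
    intro x y
    obtain ⟨Q, hQ⟩ := hP 0
    rw [hQ, hQ]
    congr 1
    funext i
    exact i.elim0
  have hPk0 : ∀ k : ℕ, P (k + 1) 0 = 0 := by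
    intro k
    have h1 := homog (k + 1) 0 0
    rw [smul_zero, zero_pow (Nat.succ_ne_zero k), zero_smul] at h1
    exact h1
  have hpt : ∀ x ∈ Metric.ball (0 : A) δ,
      Tendsto (fun N => ∑ k ∈ Finset.range (N + 1), P k x) atTop (𝓝 (f x)) :=
    fun x hx => hconv.tendsto_at hx
  have h0mem : (0 : A) ∈ Metric.ball (0 : A) δ := Metric.mem_ball_self hδ
  constructor
  · intro H
    -- f 0 = 0
    have hf0 : f 0 = 0 := by
      have h1 := H 0 0 h0mem h0mem (by simpa using h0mem) ⟨by simp, by simp⟩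
      rw [add_zero, left_eq_add] at h1
      exact h1
    -- P 0 = 0
    have hP0 : ∀ x : A, P 0 x = 0 := by
      have hlim := hpt 0 h0mem
      have heq : ∀ N : ℕ, ∑ k ∈ Finset.range (N + 1), P k 0 = P 0 0 := by
        intro N
        rw [Finset.sum_range_succ']
        rw [Finset.sum_eq_zero (fun k _ => hPk0 k), zero_add]
      rw [tendsto_congr heq] at hlim
      have hP00 : P 0 0 = f 0 := tendsto_nhds_unique tendsto_const_nhds hlim
      intro x
      rw [hP0const x 0, hP00, hf0]
    refine ⟨fun k a b hab => ?_, hP0⟩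
    -- set up scaling
    set M : ℝ := ‖a‖ + ‖b‖ + 1 with hM
    have hMpos : 0 < M := by positivity
    set ε : ℝ := δ / M with hε
    have hεpos : 0 < ε := by positivity
    have hmem : ∀ (t : ℝ), 0 < t → t < ε → ∀ x : A, ‖x‖ < M →
        (t : ℂ) • x ∈ Metric.ball (0 : A) δ := by
      intro t ht htε x hx
      rw [mem_ball_zero_iff, norm_smul, Complex.norm_real, Real.norm_eq_abs, abs_of_pos ht]
      calc t * ‖x‖ ≤ t * M := by
            apply mul_le_mul_of_nonneg_left hx.le ht.le
        _ < ε * M := by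
            apply mul_lt_mul_of_pos_right htε hMpos
        _ = δ := by rw [hε]; field_simp
    have horths : ∀ t : ℂ, Ortho ((t : ℂ) • a) ((t : ℂ) • b) := by
      intro t
      obtain ⟨h1, h2⟩ := hab
      constructor
      · rw [star_smul, smul_mul_smul_comm, h1, smul_zero]
      · rw [star_smul, smul_mul_smul_comm, h2, smul_zero]
    have hna : ‖a‖ < M := by rw [hM]; have := norm_nonneg b; linarith
    have hnb : ‖b‖ < M := by rw [hM]; have := norm_nonneg a; linarith
    have hnab : ‖a + b‖ < M := by
      have := norm_add_le a b
      rw [hM]; linarith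
    -- coefficient sequence
    set c : ℕ → B := fun n => P n (a + b) - P n a - P n b with hc
    have hck : ∀ n, c n = 0 := by
      apply aux_coeff_zero c ε hεpos
      intro t ht htε
      have hfa := hpt _ (hmem t ht htε a hna)
      have hfb := hpt _ (hmem t ht htε b hnb)
      have hfab := hpt _ (hmem t ht htε (a + b) hnab)
      have hH := H ((t : ℂ) • a) ((t : ℂ) • b) (hmem t ht htε a hna)
        (hmem t ht htε b hnb) (by rw [← smul_add]; exact hmem t ht htε (a + b) hnab)
        (horths t)
      rw [← smul_add] at hH
      have hlim := (hfab.sub hfa).sub hfb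
      rw [hH] at hlim
      have hzero : f ((t:ℂ) • a) + f ((t:ℂ) • b) - f ((t:ℂ) • a) - f ((t:ℂ) • b) = 0 := by
        abel
      rw [hzero] at hlim
      refine hlim.congr fun N => ?_
      rw [← Finset.sum_sub_distrib, ← Finset.sum_sub_distrib]
      apply Finset.sum_congr rfl
      intro n _
      rw [hc]
      simp only [homog]
      rw [smul_sub, smul_sub]
    have h2 : P k (a + b) - P k a - P k b = 0 := hck k
    have h3 : P k (a + b) - (P k a + P k b) = 0 := by rw [← sub_sub]; exact h2
    exact sub_eq_zero.mp h3
  · rintro ⟨hadd, hP0⟩ a b ha hb hab hO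
    have h1 := hpt a ha
    have h2 := hpt b hb
    have h3 := hpt (a + b) hab
    have heq : ∀ N : ℕ, ∑ k ∈ Finset.range (N + 1), P k (a + b)
        = (∑ k ∈ Finset.range (N + 1), P k a) + ∑ k ∈ Finset.range (N + 1), P k b := by
      intro N
      rw [← Finset.sum_add_distrib]
      exact Finset.sum_congr rfl fun k _ => hadd k a b hO
    rw [tendsto_congr heq] at h3
    exact tendsto_nhds_unique h3 (h1.add h2)
end

section
/- Let f : B_A(0, ϱ) → B be a holomorphic map between C*-algebras whose Taylor series at zero, f = Σ_{k≥0} P_k, converges uniformly on U = B_A(0, δ). Then f is orthogonality preserving on U (a ⊥ b in U implies f(a) ⊥ f(b)) if and only if P_0 = 0 and the pair (P_n, P_m) is orthogonality preserving on A for all n, m ≥ 1. -/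
open Filter

/-- If the partial sums of a power series with coefficients `c k` tend to `0` at every point
of a complex ball of positive radius, then all coefficients vanish. -/
lemma coeff_eq_zero_of_tendsto_zero {B : Type*} [NormedAddCommGroup B] [NormedSpace ℂ B]
    [CompleteSpace B] (c : ℕ → B) (ε : ℝ) (hε : 0 < ε)
    (h : ∀ z : ℂ, ‖z‖ < ε → Tendsto (fun N => ∑ k ∈ Finset.range (N + 1), z ^ k • c k)
      atTop (nhds 0)) : ∀ k, c k = 0 := by
  set r : ℝ := ε / 2 with hr
  have hr0 : 0 < r := by positivity
  have hrε : r < ε := by simp [hr]; linarith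
  -- the terms at z = r tend to 0, hence are bounded
  have hz0 : ‖(r : ℂ)‖ < ε := by simpa [abs_of_pos hr0] using hrε
  have hT : Tendsto (fun N => ∑ k ∈ Finset.range N, (r : ℂ) ^ k • c k) atTop (nhds 0) := by
    have := h (r : ℂ) hz0
    exact (tendsto_add_atTop_iff_nat 1).mp (by simpa using this)
  have hterm : Tendsto (fun N => (r : ℂ) ^ N • c N) atTop (nhds 0) := by
    have := (h (r : ℂ) hz0).sub hT
    simpa [Finset.sum_range_succ] using this
  have hbdd : ∃ M : ℝ, ∀ k, ‖c k‖ * r ^ k ≤ M := by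
    obtain ⟨M, hM⟩ := hterm.norm.bddAbove_range
    refine ⟨M, fun k => ?_⟩
    have := hM (Set.mem_range_self (f := fun N => ‖(r : ℂ) ^ N • c N‖) k)
    calc ‖c k‖ * r ^ k = ‖(r : ℂ) ^ k • c k‖ := by
          rw [norm_smul, norm_pow, Complex.norm_real, Real.norm_of_nonneg hr0.le, mul_comm]
      _ ≤ M := this
  obtain ⟨M, hM⟩ := hbdd
  -- build the formal multilinear series
  set p : FormalMultilinearSeries ℂ ℂ B :=
    fun k => ContinuousMultilinearMap.mkPiRing ℂ (Fin k) (c k) with hp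
  have hpapp : ∀ k (z : ℂ), (p k fun _ => z) = z ^ k • c k := by
    intro k z
    simp [hp, ContinuousMultilinearMap.mkPiRing_apply]
  have hrad : (r.toNNReal : ENNReal) ≤ p.radius := by
    apply p.le_radius_of_bound M
    intro n
    have : ‖p n‖ = ‖c n‖ := ContinuousMultilinearMap.norm_mkPiRing (c n)
    rw [this]
    simpa [Real.coe_toNNReal _ hr0.le] using hM n
  have hradpos : 0 < p.radius := lt_of_lt_of_le (by simpa using hr0) hrad
  have hball := p.hasFPowerSeriesOnBall hradpos
  -- p.sum is eventually 0
  have hev : p.sum =ᶠ[nhds (0 : ℂ)] 0 := by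
    filter_upwards [Metric.ball_mem_nhds (0 : ℂ) hr0] with z hz
    have hz' : ‖z‖ < r := by simpa using hz
    have hmem : z ∈ Metric.eball (0 : ℂ) p.radius := by
      rw [EMetric.mem_ball, edist_zero_right]
      calc (‖z‖₊ : ENNReal) < (r.toNNReal : ENNReal) := by
            rw [ENNReal.coe_lt_coe]
            exact_mod_cast (by simpa [Real.coe_toNNReal _ hr0.le] using hz' :
              (‖z‖₊ : ℝ) < (r.toNNReal : ℝ))
        _ ≤ p.radius := hrad
    have hsum := (p.hasSum hmem).tendsto_sum_nat
    have hsum' : Tendsto (fun N => ∑ k ∈ Finset.range (N + 1), z ^ k • c k)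
        atTop (nhds (p.sum z)) := by
      have := (tendsto_add_atTop_iff_nat 1).mpr hsum
      simpa [hpapp] using this
    exact tendsto_nhds_unique hsum' (h z (lt_trans hz' hrε))
  have hzero : p = 0 := (hball.hasFPowerSeriesAt.congr hev).eq_zero
  intro k
  have := hpapp k 1
  rw [hzero] at this
  simpa using this.symm

/-- let `f : B_A(0,ϱ) → B` be a holomorphic map between C*-algebras whose
Taylor series at zero `f = Σ P_k` converges uniformly on `U = B_A(0,δ)`. Then `f` is
orthogonality preserving on `U` iff `P₀ = 0` and the pair `(P_n, P_m)` is orthogonality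
preserving on `A` for all `n, m ≥ 1`. -/
theorem op_iff_pairs_of_components_op
    {A B : Type*} [NonUnitalCStarAlgebra A] [NonUnitalCStarAlgebra B]
    (ϱ δ : ℝ) (hδ : 0 < δ) (hδϱ : δ ≤ ϱ) (f : A → B)
    (hf : DifferentiableOn ℂ f (Metric.ball 0 ϱ))
    (P : ℕ → A → B)
    (hP : ∀ k, ∃ Q : ContinuousMultilinearMap ℂ (fun _ : Fin k => A) B,
      ∀ x : A, P k x = Q (fun _ => x))
    (hconv : TendstoUniformlyOn (fun N x => ∑ k ∈ Finset.range (N + 1), P k x) f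
      atTop (Metric.ball 0 δ)) :
    (∀ a b : A, a ∈ Metric.ball (0 : A) δ → b ∈ Metric.ball (0 : A) δ →
        Ortho a b → Ortho (f a) (f b)) ↔
      ((∀ x : A, P 0 x = 0) ∧
        (∀ n m : ℕ, 1 ≤ n → 1 ≤ m → ∀ a b : A, Ortho a b → Ortho (P n a) (P m b))) := by
  -- homogeneity of the components
  have homog : ∀ (k : ℕ) (s : ℂ) (x : A), P k (s • x) = s ^ k • P k x := by
    intro k s x
    obtain ⟨Q, hQ⟩ := hP k
    rw [hQ, hQ]
    have := Q.map_smul_univ (fun _ => s) (fun _ => x)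
    simpa using this
  have hP0const : ∀ x : A, P 0 x = P 0 0 := by
    intro x
    obtain ⟨Q, hQ⟩ := hP 0
    rw [hQ, hQ]
    congr 1
    funext i
    exact Fin.elim0 i
  -- pointwise convergence
  have hpt : ∀ x ∈ Metric.ball (0 : A) δ,
      Tendsto (fun N => ∑ k ∈ Finset.range (N + 1), P k x) atTop (nhds (f x)) :=
    fun x hx => hconv.tendsto_at hx
  constructor
  · intro hop
    have h0mem : (0 : A) ∈ Metric.ball (0 : A) δ := Metric.mem_ball_self hδ
    have hf0 : f 0 = 0 := by
      have h00 : Ortho (f 0) (f 0) := hop 0 0 h0mem h0mem ⟨by simp, by simp⟩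
      have : ‖f 0‖ * ‖f 0‖ = 0 := by
        rw [← CStarRing.norm_self_mul_star, h00.1, norm_zero]
      have h2 : ‖f 0‖ = 0 := by nlinarith [norm_nonneg (f 0)]
      exact norm_eq_zero.mp h2
    have hPk0 : ∀ k : ℕ, 1 ≤ k → P k (0 : A) = 0 := by
      intro k hk
      have := homog k 0 0
      simpa [zero_pow (by omega : k ≠ 0)] using this
    have hP00 : P 0 (0 : A) = 0 := by
      have h1 := hpt 0 h0mem
      have h2 : ∀ N : ℕ, ∑ k ∈ Finset.range (N + 1), P k (0 : A) = P 0 0 := by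
        intro N
        rw [Finset.sum_eq_single_of_mem 0 (Finset.mem_range.mpr (Nat.succ_pos N))]
        intro k _ hk
        exact hPk0 k (Nat.one_le_iff_ne_zero.mpr hk)
      have h3 : Tendsto (fun _ : ℕ => P 0 (0 : A)) atTop (nhds (f 0)) := by
        simpa [h2] using h1
      have := tendsto_nhds_unique h3 tendsto_const_nhds
      rw [← this]
      exact hf0
    refine ⟨fun x => (hP0const x).trans hP00, ?_⟩
    intro n m _ _ a b hab
    -- scaling setup
    set ε : ℝ := δ / (max ‖a‖ ‖b‖ + 1) with hε
    have hmax0 : (0 : ℝ) < max ‖a‖ ‖b‖ + 1 := by positivity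
    have hε0 : 0 < ε := div_pos hδ hmax0
    have hamem : ∀ s : ℂ, ‖s‖ < ε → s • a ∈ Metric.ball (0 : A) δ := by
      intro s hs
      rw [Metric.mem_ball, dist_zero_right, norm_smul]
      calc ‖s‖ * ‖a‖ ≤ ‖s‖ * (max ‖a‖ ‖b‖ + 1) := by
            apply mul_le_mul_of_nonneg_left _ (norm_nonneg s)
            exact le_trans (le_max_left _ _) (by linarith)
        _ < ε * (max ‖a‖ ‖b‖ + 1) := by
            exact mul_lt_mul_of_pos_right hs hmax0
        _ = δ := by rw [hε, div_mul_cancel₀ _ hmax0.ne']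
    have hbmem : ∀ t : ℂ, ‖t‖ < ε → t • b ∈ Metric.ball (0 : A) δ := by
      intro t ht
      rw [Metric.mem_ball, dist_zero_right, norm_smul]
      calc ‖t‖ * ‖b‖ ≤ ‖t‖ * (max ‖a‖ ‖b‖ + 1) := by
            apply mul_le_mul_of_nonneg_left _ (norm_nonneg t)
            exact le_trans (le_max_right _ _) (by linarith)
        _ < ε * (max ‖a‖ ‖b‖ + 1) := by
            exact mul_lt_mul_of_pos_right ht hmax0
        _ = δ := by rw [hε, div_mul_cancel₀ _ hmax0.ne']
    have horth : ∀ s t : ℂ, Ortho (s • a) (t • b) := by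
      intro s t
      constructor
      · simp [star_smul, smul_mul_assoc, mul_smul_comm, hab.1]
      · simp [star_smul, smul_mul_assoc, mul_smul_comm, hab.2]
    have hzero : ∀ s t : ℂ, ‖s‖ < ε → ‖t‖ < ε →
        f (s • a) * star (f (t • b)) = 0 ∧ star (f (t • b)) * f (s • a) = 0 := by
      intro s t hs ht
      exact hop _ _ (hamem s hs) (hbmem t ht) (horth s t)
    -- Step A: f (s•a) * star (P m' b) = 0
    have stepA : ∀ s : ℂ, ‖s‖ < ε → ∀ m' : ℕ, f (s • a) * star (P m' b) = 0 := by
      intro s hs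
      apply coeff_eq_zero_of_tendsto_zero (fun m' => f (s • a) * star (P m' b)) ε hε0
      intro z hz
      set u : ℂ := starRingEnd ℂ z with hu
      have hun : ‖u‖ < ε := by rwa [hu, RCLike.norm_conj]
      have h1 : Tendsto
          (fun N => f (s • a) * star (∑ k ∈ Finset.range (N + 1), P k (u • b)))
          atTop (nhds (f (s • a) * star (f (u • b)))) :=
        tendsto_const_nhds.mul ((hpt (u • b) (hbmem u hun)).star)
      have heq : ∀ N : ℕ, f (s • a) * star (∑ k ∈ Finset.range (N + 1), P k (u • b)) =
          ∑ k ∈ Finset.range (N + 1), z ^ k • (f (s • a) * star (P k b)) := by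
        intro N
        rw [star_sum, Finset.mul_sum]
        apply Finset.sum_congr rfl
        intro k _
        rw [homog k u b, star_smul, mul_smul_comm]
        congr 1
        simp [hu, ← map_pow]
      rw [(hzero s u hs hun).1] at h1
      exact h1.congr fun N => heq N
    -- Step A': star (P m' b) * f (s•a) = 0
    have stepA' : ∀ s : ℂ, ‖s‖ < ε → ∀ m' : ℕ, star (P m' b) * f (s • a) = 0 := by
      intro s hs
      apply coeff_eq_zero_of_tendsto_zero (fun m' => star (P m' b) * f (s • a)) ε hε0
      intro z hz
      set u : ℂ := starRingEnd ℂ z with hu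
      have hun : ‖u‖ < ε := by rwa [hu, RCLike.norm_conj]
      have h1 : Tendsto
          (fun N => star (∑ k ∈ Finset.range (N + 1), P k (u • b)) * f (s • a))
          atTop (nhds (star (f (u • b)) * f (s • a))) :=
        ((hpt (u • b) (hbmem u hun)).star).mul tendsto_const_nhds
      have heq : ∀ N : ℕ, star (∑ k ∈ Finset.range (N + 1), P k (u • b)) * f (s • a) =
          ∑ k ∈ Finset.range (N + 1), z ^ k • (star (P k b) * f (s • a)) := by
        intro N
        rw [star_sum, Finset.sum_mul]
        apply Finset.sum_congr rfl
        intro k _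
        rw [homog k u b, star_smul, smul_mul_assoc]
        congr 1
        simp [hu, ← map_pow]
      rw [(hzero s u hs hun).2] at h1
      exact h1.congr fun N => heq N
    -- Step B: P n' a * star (P m b) = 0 and symmetric
    constructor
    · have := coeff_eq_zero_of_tendsto_zero (fun n' => P n' a * star (P m b)) ε hε0 ?_ n
      · exact this
      intro z hz
      have h1 : Tendsto
          (fun N => (∑ k ∈ Finset.range (N + 1), P k (z • a)) * star (P m b))
          atTop (nhds (f (z • a) * star (P m b))) :=
        (hpt (z • a) (hamem z hz)).mul tendsto_const_nhds
      have heq : ∀ N : ℕ, (∑ k ∈ Finset.range (N + 1), P k (z • a)) * star (P m b) =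
          ∑ k ∈ Finset.range (N + 1), z ^ k • (P k a * star (P m b)) := by
        intro N
        rw [Finset.sum_mul]
        apply Finset.sum_congr rfl
        intro k _
        rw [homog k z a, smul_mul_assoc]
      rw [stepA z hz m] at h1
      exact h1.congr fun N => heq N
    · have := coeff_eq_zero_of_tendsto_zero (fun n' => star (P m b) * P n' a) ε hε0 ?_ n
      · exact this
      intro z hz
      have h1 : Tendsto
          (fun N => star (P m b) * (∑ k ∈ Finset.range (N + 1), P k (z • a)))
          atTop (nhds (star (P m b) * f (z • a))) :=
        tendsto_const_nhds.mul (hpt (z • a) (hamem z hz))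
      have heq : ∀ N : ℕ, star (P m b) * (∑ k ∈ Finset.range (N + 1), P k (z • a)) =
          ∑ k ∈ Finset.range (N + 1), z ^ k • (star (P m b) * P k a) := by
        intro N
        rw [Finset.mul_sum]
        apply Finset.sum_congr rfl
        intro k _
        rw [homog k z a, mul_smul_comm]
      rw [stepA' z hz m] at h1
      exact h1.congr fun N => heq N
  · rintro ⟨hP0, hpair⟩ a b ha hb hab
    have hterm1 : ∀ N : ℕ, (∑ k ∈ Finset.range (N + 1), P k a) *
        star (∑ k ∈ Finset.range (N + 1), P k b) = 0 := by
      intro N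
      rw [star_sum, Finset.sum_mul]
      apply Finset.sum_eq_zero
      intro n _
      rw [Finset.mul_sum]
      apply Finset.sum_eq_zero
      intro m _
      rcases Nat.eq_zero_or_pos n with hn | hn
      · rw [hn, hP0 a, zero_mul]
      rcases Nat.eq_zero_or_pos m with hm | hm
      · rw [hm, hP0 b, star_zero, mul_zero]
      exact (hpair n m hn hm a b hab).1
    have hterm2 : ∀ N : ℕ, star (∑ k ∈ Finset.range (N + 1), P k b) *
        (∑ k ∈ Finset.range (N + 1), P k a) = 0 := by
      intro N
      rw [star_sum, Finset.sum_mul]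
      apply Finset.sum_eq_zero
      intro m _
      rw [Finset.mul_sum]
      apply Finset.sum_eq_zero
      intro n _
      rcases Nat.eq_zero_or_pos m with hm | hm
      · rw [hm, hP0 b, star_zero, zero_mul]
      rcases Nat.eq_zero_or_pos n with hn | hn
      · rw [hn, hP0 a, mul_zero]
      exact (hpair n m hn hm a b hab).2
    constructor
    · have h1 : Tendsto (fun N => (∑ k ∈ Finset.range (N + 1), P k a) *
          star (∑ k ∈ Finset.range (N + 1), P k b)) atTop (nhds (f a * star (f b))) :=
        (hpt a ha).mul ((hpt b hb).star)
      simp only [hterm1] at h1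
      exact (tendsto_nhds_unique h1 tendsto_const_nhds)
    · have h1 : Tendsto (fun N => star (∑ k ∈ Finset.range (N + 1), P k b) *
          (∑ k ∈ Finset.range (N + 1), P k a)) atTop (nhds (star (f b) * f a)) :=
        ((hpt b hb).star).mul (hpt a ha)
      simp only [hterm2] at h1
      exact (tendsto_nhds_unique h1 tendsto_const_nhds)
end
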